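/- arXiv:1102.3321 — 4 statements merged into one kernel-verified Lean document; each statement's English description precedes it below -/
import Mathlib

section
/- Let p be a prime and let a, b, c be nonnegative integers with a < p−1, b < p−1, c < p−1. If α^a + α^b = 1 + α^c holds in 𝔽_p for every α ∈ 𝔽_p^×, then either (a = 0 and b = c) or (b = 0 and a = c). -/
open Polynomial

/-- if `α^a + α^b = 1 + α^c` for all `α ∈ 𝔽_p^×`, with `a, b, c < p − 1`, then
either `a = 0` and `b = c`, or `b = 0` and `a = c`. -/
theorem stmt5 (p : ℕ) (hp : p.Prime) (a b c : ℕ)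
    (ha : a < p - 1) (hb : b < p - 1) (hc : c < p - 1)
    (h : ∀ α : (ZMod p)ˣ, (α : ZMod p) ^ a + (α : ZMod p) ^ b = 1 + (α : ZMod p) ^ c) :
    (a = 0 ∧ b = c) ∨ (b = 0 ∧ a = c) := by
  haveI := Fact.mk hp
  have hp2 : 2 ≤ p := hp.two_le
  set f : (ZMod p)[X] := X ^ a + X ^ b - 1 - X ^ c with hf
  have hdeg : f.natDegree ≤ p - 2 := by
    rw [hf]
    compute_degree
    all_goals omega
  have hcard : f.natDegree < Fintype.card (ZMod p)ˣ := by
    rw [ZMod.card_units_eq_totient, Nat.totient_prime hp]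
    omega
  have hf0 : f = 0 := by
    apply Polynomial.eq_zero_of_natDegree_lt_card_of_eval_eq_zero f
      (f := fun α : (ZMod p)ˣ => (α : ZMod p)) Units.val_injective _ hcard
    intro α
    have := h α
    simp only [hf, eval_sub, eval_add, eval_pow, eval_X, eval_one]
    rw [this]; ring
  have h2 : (X ^ a + X ^ b : (ZMod p)[X]) = 1 + X ^ c := by
    have : (X ^ a + X ^ b : (ZMod p)[X]) - 1 - X ^ c = 0 := hf0
    linear_combination this
  by_cases ha0 : a = 0
  · subst ha0
    simp only [pow_zero] at h2
    have hbc : (X ^ b : (ZMod p)[X]) = X ^ c := by linear_combination h2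
    have : b = c := by
      have := congrArg natDegree hbc
      simpa [natDegree_X_pow] using this
    exact Or.inl ⟨rfl, this⟩
  · by_cases hb0 : b = 0
    · subst hb0
      simp only [pow_zero] at h2
      have hac : (X ^ a : (ZMod p)[X]) = X ^ c := by linear_combination h2
      have : a = c := by
        have := congrArg natDegree hac
        simpa [natDegree_X_pow] using this
      exact Or.inr ⟨rfl, this⟩
    · exfalso
      have hco := congrArg (fun q : (ZMod p)[X] => q.coeff 0) h2
      simp only [coeff_add, coeff_X_pow, coeff_one,
        if_neg (Ne.symm ha0), if_neg (Ne.symm hb0), zero_add] at hco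
      by_cases hc0 : c = 0
      · subst hc0
        norm_num at hco
        have h2z : ((2 : ℕ) : ZMod p) = 0 := by push_cast; linear_combination -hco
        have := (ZMod.natCast_eq_zero_iff 2 p).mp h2z
        have hpeq : p = 2 := (Nat.prime_dvd_prime_iff_eq hp Nat.prime_two).mp this
        omega
      · rw [if_neg (Ne.symm hc0), add_zero] at hco
        exact one_ne_zero hco.symm
end

section
/- Let p ≥ 5 be a prime and let k₁, k₂ be even integers with 4 ≤ k₁ < k₂ ≤ p+1. Then there exists an integer i ≥ 0 such that ℓ^i · (1 + ℓ^{k₁−1}) = 1 + ℓ^{k₂−1} in 𝔽_p for every prime ℓ ≠ p, if and only if k₁ + k₂ ≡ 2 (mod p−1). Moreover, in that case any such i satisfies i ≡ p − k₁ (mod p−1). -/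
/-- for even `4 ≤ k₁ < k₂ ≤ p+1`, the Eisenstein eigensystems of weights `k₁` and
`k₂` are equivalent iff `k₁ + k₂ ≡ 2 (mod p−1)`; moreover any twisting exponent `i` satisfies
`i ≡ p − k₁ (mod p−1)`. -/
theorem stmt6 (p : ℕ) (hp : p.Prime) (hp5 : 5 ≤ p) (k₁ k₂ : ℕ)
    (he₁ : Even k₁) (he₂ : Even k₂) (h4 : 4 ≤ k₁) (hlt : k₁ < k₂) (hle : k₂ ≤ p + 1) :
    ((∃ i : ℕ, ∀ ℓ : ℕ, ℓ.Prime → ℓ ≠ p →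
        (ℓ : ZMod p) ^ i * (1 + (ℓ : ZMod p) ^ (k₁ - 1)) = 1 + (ℓ : ZMod p) ^ (k₂ - 1)) ↔
      k₁ + k₂ ≡ 2 [MOD p - 1]) ∧
    (k₁ + k₂ ≡ 2 [MOD p - 1] →
      ∀ i : ℕ, (∀ ℓ : ℕ, ℓ.Prime → ℓ ≠ p →
          (ℓ : ZMod p) ^ i * (1 + (ℓ : ZMod p) ^ (k₁ - 1)) = 1 + (ℓ : ZMod p) ^ (k₂ - 1)) →
        i ≡ p - k₁ [MOD p - 1]) := by
  classical
  haveI : Fact p.Prime := ⟨hp⟩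
  have hpodd : Odd p := hp.odd_of_ne_two (by omega)
  have hdeven : Even (p - 1) := Nat.Odd.sub_odd hpodd odd_one
  have hk1odd : Odd (k₁ - 1) := Nat.Even.sub_odd (by omega) he₁ odd_one
  have hnd1 : ¬ (p - 1) ∣ (k₁ - 1) := by
    rintro ⟨c, hc⟩
    exact Nat.not_even_iff_odd.mpr hk1odd (hc ▸ hdeven.mul_right c)
  have h10 : (1 : ZMod p) ≠ 0 := one_ne_zero
  have h20 : (2 : ZMod p) ≠ 0 := by
    intro h
    have hdvd : p ∣ 2 := (ZMod.natCast_eq_zero_iff 2 p).mp (by exact_mod_cast h)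
    have := Nat.le_of_dvd (by norm_num) hdvd
    omega
  -- key congruence helper
  have key : ∀ n t : ℕ, (p - 1) ∣ n + t * (p - 2) ↔ n ≡ t [MOD p - 1] := by
    intro n t
    have h2 : t + t * (p - 2) = t * (p - 1) := by
      have h3 : (1 : ℕ) + (p - 2) = p - 1 := by omega
      calc t + t * (p - 2) = t * (1 + (p - 2)) := by ring
        _ = t * (p - 1) := by rw [h3]
    have h0 : t + t * (p - 2) ≡ 0 [MOD p - 1] := by
      rw [h2]; exact (Nat.modEq_zero_iff_dvd).mpr (dvd_mul_left _ t)
    constructor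
    · intro h
      have h1 : n + t * (p - 2) ≡ t + t * (p - 2) [MOD p - 1] :=
        ((Nat.modEq_zero_iff_dvd).mpr h).trans h0.symm
      exact Nat.ModEq.add_right_cancel' _ h1
    · intro h
      exact (Nat.modEq_zero_iff_dvd).mp ((h.add_right _).trans h0)
  -- Fermat-type power lemma
  have hpow : ∀ (x : ZMod p), x ≠ 0 → ∀ a b : ℕ, a ≡ b [MOD p - 1] → x ^ a = x ^ b := by
    intro x hx a b hab
    have h1 : x ^ (p - 1) = 1 := ZMod.pow_card_sub_one_eq_one hx
    have e : ∀ a : ℕ, x ^ a = x ^ (a % (p - 1)) := by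
      intro a
      conv_lhs => rw [← Nat.div_add_mod a (p - 1)]
      rw [pow_add, pow_mul, h1, one_pow, one_mul]
    rw [e a, e b, hab]
  -- main forward analysis
  have main : ∀ i : ℕ, (∀ ℓ : ℕ, ℓ.Prime → ℓ ≠ p →
      (ℓ : ZMod p) ^ i * (1 + (ℓ : ZMod p) ^ (k₁ - 1)) = 1 + (ℓ : ZMod p) ^ (k₂ - 1)) →
      (p - 1) ∣ i + (k₁ - 1) ∧ i ≡ k₂ - 1 [MOD p - 1] := by
    intro i H
    -- transfer to all units via Dirichlet
    have Hu : ∀ u : (ZMod p)ˣ, (u : ZMod p) ^ i * (1 + (u : ZMod p) ^ (k₁ - 1))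
        = 1 + (u : ZMod p) ^ (k₂ - 1) := by
      intro u
      obtain ⟨ℓ, hℓp, hℓprime, hℓeq⟩ :=
        Nat.forall_exists_prime_gt_and_eq_mod (q := p) u.isUnit p
      have := H ℓ hℓprime (by omega)
      rwa [hℓeq] at this
    -- sum of n-th powers over units
    have hs : ∀ n : ℕ, ∑ x : (ZMod p)ˣ, ((x : ZMod p)) ^ n
        = if (p - 1) ∣ n then (-1 : ZMod p) else 0 := by
      intro n
      have h := FiniteField.sum_pow_units (ZMod p) n
      rw [ZMod.card p] at h
      rw [← h]
    have hsum : ∀ t : ℕ,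
        (if (p - 1) ∣ i + t then (-1 : ZMod p) else 0)
          + (if (p - 1) ∣ i + (k₁ - 1) + t then (-1 : ZMod p) else 0)
        = (if (p - 1) ∣ t then (-1 : ZMod p) else 0)
          + (if (p - 1) ∣ (k₂ - 1) + t then (-1 : ZMod p) else 0) := by
      intro t
      have hpt : ∀ u : (ZMod p)ˣ, (u : ZMod p) ^ (i + t) + (u : ZMod p) ^ (i + (k₁ - 1) + t)
          = (u : ZMod p) ^ t + (u : ZMod p) ^ ((k₂ - 1) + t) := by
        intro u
        have h := Hu u
        calc (u : ZMod p) ^ (i + t) + (u : ZMod p) ^ (i + (k₁ - 1) + t)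
            = ((u : ZMod p) ^ i * (1 + (u : ZMod p) ^ (k₁ - 1))) * (u : ZMod p) ^ t := by
              rw [pow_add, pow_add, pow_add]; ring
          _ = (1 + (u : ZMod p) ^ (k₂ - 1)) * (u : ZMod p) ^ t := by rw [h]
          _ = (u : ZMod p) ^ t + (u : ZMod p) ^ ((k₂ - 1) + t) := by
              rw [pow_add]; ring
      have hS := Finset.sum_congr rfl (fun u (_ : u ∈ Finset.univ) => hpt u)
      rw [Finset.sum_add_distrib, Finset.sum_add_distrib, hs, hs, hs, hs] at hS
      exact hS
    -- Equation E1 at t = i * (p - 2)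
    have E1 := hsum (i * (p - 2))
    have c1 : (p - 1) ∣ i + i * (p - 2) := (key i i).mpr (Nat.ModEq.refl i)
    have c2 : ¬ (p - 1) ∣ i + (k₁ - 1) + i * (p - 2) := by
      intro h
      have h' : i + (k₁ - 1) ≡ i + 0 [MOD p - 1] := by
        simpa using (key _ _).mp h
      exact hnd1 ((Nat.modEq_zero_iff_dvd).mp (Nat.ModEq.add_left_cancel' i h'))
    have c3 : (p - 1) ∣ i * (p - 2) ↔ (p - 1) ∣ i := by
      rw [show i * (p - 2) = 0 + i * (p - 2) by ring, key]
      constructor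
      · intro h; exact (Nat.modEq_zero_iff_dvd).mp h.symm
      · intro h; exact ((Nat.modEq_zero_iff_dvd).mpr h).symm
    have c4 : (p - 1) ∣ (k₂ - 1) + i * (p - 2) ↔ k₂ - 1 ≡ i [MOD p - 1] := key _ _
    rw [if_pos c1, if_neg c2] at E1
    -- Equation E2 at t = (i + (k₁ - 1)) * (p - 2)
    have E2 := hsum ((i + (k₁ - 1)) * (p - 2))
    have d1 : ¬ (p - 1) ∣ i + (i + (k₁ - 1)) * (p - 2) := by
      intro h
      have h' : i + 0 ≡ i + (k₁ - 1) [MOD p - 1] := by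
        simpa using (key _ _).mp h
      exact hnd1 ((Nat.modEq_zero_iff_dvd).mp (Nat.ModEq.add_left_cancel' i h'.symm))
    have d2 : (p - 1) ∣ i + (k₁ - 1) + (i + (k₁ - 1)) * (p - 2) :=
      (key _ _).mpr (Nat.ModEq.refl _)
    have d3 : (p - 1) ∣ (i + (k₁ - 1)) * (p - 2) ↔ (p - 1) ∣ i + (k₁ - 1) := by
      rw [show (i + (k₁ - 1)) * (p - 2) = 0 + (i + (k₁ - 1)) * (p - 2) by ring, key]
      constructor
      · intro h; exact (Nat.modEq_zero_iff_dvd).mp h.symm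
      · intro h; exact ((Nat.modEq_zero_iff_dvd).mpr h).symm
    have d4 : (p - 1) ∣ (k₂ - 1) + (i + (k₁ - 1)) * (p - 2) ↔
        k₂ - 1 ≡ i + (k₁ - 1) [MOD p - 1] := key _ _
    rw [if_neg d1, if_pos d2] at E2
    -- case analysis
    by_cases hdi : (p - 1) ∣ i
    · exfalso
      rw [if_pos (c3.mpr hdi)] at E1
      by_cases hik2 : k₂ - 1 ≡ i [MOD p - 1]
      · rw [if_pos (c4.mpr hik2)] at E1
        exact h10 (by linear_combination E1)
      · -- use E2
        have nd3 : ¬ (p - 1) ∣ i + (k₁ - 1) := by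
          intro h
          exact hnd1 ((Nat.dvd_add_right hdi).mp h)
        have nd4 : ¬ (k₂ - 1 ≡ i + (k₁ - 1) [MOD p - 1]) := by
          intro h
          have hik : i + (k₁ - 1) ≡ 0 + (k₁ - 1) [MOD p - 1] :=
            Nat.ModEq.add_right _ ((Nat.modEq_zero_iff_dvd).mpr hdi)
          have h21 : k₂ - 1 ≡ k₁ - 1 [MOD p - 1] := (h.trans hik).trans (by rw [Nat.zero_add])
          have hdd : (p - 1) ∣ (k₂ - 1) - (k₁ - 1) :=
            (Nat.modEq_iff_dvd' (by omega)).mp h21.symm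
          have hdd' : (p - 1) ∣ k₂ - k₁ := by
            have : k₂ - 1 - (k₁ - 1) = k₂ - k₁ := by omega
            rwa [this] at hdd
          have := Nat.le_of_dvd (by omega) hdd'
          omega
        rw [if_neg (fun h => nd3 (d3.mp h)), if_neg (fun h => nd4 (d4.mp h))] at E2
        exact h10 (by linear_combination -E2)
    · rw [if_neg (fun h => hdi (c3.mp h))] at E1
      by_cases hik2 : k₂ - 1 ≡ i [MOD p - 1]
      · -- now use E2 to get (p-1) ∣ i + (k₁ - 1)
        have nd4 : ¬ (k₂ - 1 ≡ i + (k₁ - 1) [MOD p - 1]) := by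
          intro h
          have h' : i + 0 ≡ i + (k₁ - 1) [MOD p - 1] := by
            simpa using (hik2.symm.trans h)
          exact hnd1 ((Nat.modEq_zero_iff_dvd).mp (Nat.ModEq.add_left_cancel' i h'.symm))
        rw [if_neg (fun h => nd4 (d4.mp h))] at E2
        by_cases hd3 : (p - 1) ∣ i + (k₁ - 1)
        · exact ⟨hd3, hik2.symm⟩
        · exfalso
          rw [if_neg (fun h => hd3 (d3.mp h))] at E2
          exact h10 (by linear_combination -E2)
      · exfalso
        rw [if_neg (fun h => hik2 (c4.mp h))] at E1
        exact h10 (by linear_combination -E1)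
  -- assemble
  constructor
  · constructor
    · rintro ⟨i, H⟩
      obtain ⟨hC, hik2⟩ := main i H
      have h1 : i + (k₁ - 1) ≡ (k₂ - 1) + (k₁ - 1) [MOD p - 1] := hik2.add_right _
      have h2 : (p - 1) ∣ (k₂ - 1) + (k₁ - 1) := by
        have := ((Nat.modEq_zero_iff_dvd).mpr hC).symm.trans h1
        exact (Nat.modEq_zero_iff_dvd).mp this.symm
      have h3 : (p - 1) ∣ k₁ + k₂ - 2 := by
        have : (k₂ - 1) + (k₁ - 1) = k₁ + k₂ - 2 := by omega
        rwa [this] at h2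
      exact ((Nat.modEq_iff_dvd' (by omega)).mpr h3).symm
    · intro hk
      refine ⟨p - k₁, fun ℓ hℓ hℓp => ?_⟩
      have hx : (ℓ : ZMod p) ≠ 0 := by
        intro h
        have := (ZMod.natCast_eq_zero_iff ℓ p).mp h
        exact hℓp ((Nat.prime_dvd_prime_iff_eq hp hℓ).mp this).symm
      have hcong : p - k₁ ≡ k₂ - 1 [MOD p - 1] := by
        have ha : (p - k₁) + (k₁ - 1) ≡ 0 [MOD p - 1] := by
          have : (p - k₁) + (k₁ - 1) = p - 1 := by omega
          rw [this]
          exact (Nat.modEq_zero_iff_dvd).mpr dvd_rfl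
        have hb : (k₂ - 1) + (k₁ - 1) ≡ 0 [MOD p - 1] := by
          have h3 : (p - 1) ∣ k₁ + k₂ - 2 := (Nat.modEq_iff_dvd' (by omega)).mp hk.symm
          have : (k₂ - 1) + (k₁ - 1) = k₁ + k₂ - 2 := by omega
          rw [this]
          exact (Nat.modEq_zero_iff_dvd).mpr h3
        exact Nat.ModEq.add_right_cancel' _ (ha.trans hb.symm)
      calc (ℓ : ZMod p) ^ (p - k₁) * (1 + (ℓ : ZMod p) ^ (k₁ - 1))
          = (ℓ : ZMod p) ^ (p - k₁) + (ℓ : ZMod p) ^ ((p - k₁) + (k₁ - 1)) := by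
            rw [pow_add]; ring
        _ = (ℓ : ZMod p) ^ (k₂ - 1) + (ℓ : ZMod p) ^ (p - 1) := by
            have he : (p - k₁) + (k₁ - 1) = p - 1 := by omega
            rw [hpow _ hx _ _ hcong, he]
        _ = 1 + (ℓ : ZMod p) ^ (k₂ - 1) := by
            rw [ZMod.pow_card_sub_one_eq_one hx]; ring
  · intro _ i H
    obtain ⟨hC, _⟩ := main i H
    have ha : i + (k₁ - 1) ≡ 0 [MOD p - 1] := (Nat.modEq_zero_iff_dvd).mpr hC
    have hb : (p - k₁) + (k₁ - 1) ≡ 0 [MOD p - 1] := by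
      have : (p - k₁) + (k₁ - 1) = p - 1 := by omega
      rw [this]
      exact (Nat.modEq_zero_iff_dvd).mpr dvd_rfl
    exact Nat.ModEq.add_right_cancel' _ (ha.trans hb.symm)
end

section
/- Let p ≥ 5 be a prime and let k be an even integer with 4 ≤ k ≤ p+1. Consider the Eisenstein eigensystem Φ_k : ℓ ↦ 1 + ℓ^{k−1} ∈ 𝔽_p, defined on primes ℓ ≠ p. Then the set of functions {Φ_k[i] : i ∈ ℕ} has cardinality p − 1, unless p ≡ 3 (mod 4) and k = (p+1)/2, in which case it has cardinality (p−1)/2. -/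
section helpers
variable (p k : ℕ)

lemma cast_prime_ne_zero (hp : p.Prime) (ℓ : {ℓ : ℕ // ℓ.Prime ∧ ℓ ≠ p}) :
    (ℓ.1 : ZMod p) ≠ 0 := by
  haveI : NeZero p := ⟨hp.ne_zero⟩
  rw [Ne, ZMod.natCast_eq_zero_iff]
  intro hdvd
  exact ℓ.2.2 ((Nat.prime_dvd_prime_iff_eq hp ℓ.2.1).mp hdvd).symm

lemma period_pt (hp : p.Prime) (i : ℕ) (ℓ : {ℓ : ℕ // ℓ.Prime ∧ ℓ ≠ p}) :
    (ℓ.1:ZMod p)^(i + (p-1)) * (1 + (ℓ.1:ZMod p)^(k-1))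
      = (ℓ.1:ZMod p)^i * (1 + (ℓ.1:ZMod p)^(k-1)) := by
  haveI : Fact p.Prime := ⟨hp⟩
  rw [pow_add, ZMod.pow_card_sub_one_eq_one (cast_prime_ne_zero p hp ℓ), mul_one]

lemma period_pt_exc (hp : p.Prime) (hp5 : 5 ≤ p) (hex : 2 * k = p + 1) (i : ℕ)
    (ℓ : {ℓ : ℕ // ℓ.Prime ∧ ℓ ≠ p}) :
    (ℓ.1:ZMod p)^(i + (p-1)/2) * (1 + (ℓ.1:ZMod p)^(k-1))
      = (ℓ.1:ZMod p)^i * (1 + (ℓ.1:ZMod p)^(k-1)) := by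
  haveI : Fact p.Prime := ⟨hp⟩
  have hpodd : p % 2 = 1 := by
    have : ¬ (2 ∣ p) := fun h =>
      by have := (Nat.prime_dvd_prime_iff_eq Nat.prime_two hp).mp h; omega
    omega
  set x : ZMod p := (ℓ.1 : ZMod p) with hx
  have hsq : x^((p-1)/2) * x^((p-1)/2) = 1 := by
    rw [← pow_add, show (p-1)/2 + (p-1)/2 = p - 1 by omega]
    exact ZMod.pow_card_sub_one_eq_one (cast_prime_ne_zero p hp ℓ)
  have hk1 : k - 1 = (p-1)/2 := by omega
  rcases mul_self_eq_one_iff.mp hsq with h1 | h1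
  · rw [pow_add, hk1, h1, mul_one]
  · rw [pow_add, hk1, h1]; ring

end helpers

lemma exists_prime_cast (p : ℕ) (hp : p.Prime) (x : (ZMod p)ˣ) :
    ∃ ℓ : ℕ, ℓ.Prime ∧ ℓ ≠ p ∧ (ℓ : ZMod p) = (x : ZMod p) := by
  haveI : Fact p.Prime := ⟨hp⟩
  haveI : NeZero p := ⟨hp.ne_zero⟩
  obtain ⟨ℓ, -, hℓp, hcast⟩ := Nat.forall_exists_prime_gt_and_eq_mod (a := (x : ZMod p))
    (Units.isUnit x) 0
  refine ⟨ℓ, hℓp, ?_, hcast⟩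
  rintro rfl
  rw [ZMod.natCast_self] at hcast
  exact Units.ne_zero x hcast.symm

lemma range_ncard_of_period {α : Type*} (f : ℕ → α) (m : ℕ) (hm : 0 < m)
    (hper : ∀ i, f (i + m) = f i)
    (hinj : ∀ i j, i < m → j < m → f i = f j → i = j) :
    (Set.range f).ncard = m := by
  have hmul : ∀ t x, f (x + m * t) = f x := by
    intro t
    induction t with
    | zero => simp
    | succ n ih => intro x; rw [Nat.mul_succ, ← Nat.add_assoc, hper, ih]
  have hmod : ∀ i, f i = f (i % m) := by
    intro i
    conv_lhs => rw [← Nat.mod_add_div i m]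
    exact hmul _ _
  have himg : Set.range f = f '' ↑(Finset.range m) := by
    ext y
    constructor
    · rintro ⟨i, rfl⟩
      exact ⟨i % m, by simpa using Nat.mod_lt i hm, (hmod i).symm⟩
    · rintro ⟨i, _, rfl⟩; exact ⟨i, rfl⟩
  rw [himg, Set.ncard_image_of_injOn, Set.ncard_coe_finset, Finset.card_range]
  intro i hi j hj hij
  simp only [Finset.coe_range, Set.mem_Iio] at hi hj
  exact hinj i j hi hj hij

-- F i = F j gives the statement for all units, via Dirichlet
lemma units_of_funeq (p k : ℕ) (hp : p.Prime) {i j : ℕ}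
    (h : (fun (ℓ : {ℓ : ℕ // ℓ.Prime ∧ ℓ ≠ p}) =>
          (ℓ.1 : ZMod p) ^ i * (1 + (ℓ.1 : ZMod p) ^ (k - 1)))
       = fun ℓ => (ℓ.1 : ZMod p) ^ j * (1 + (ℓ.1 : ZMod p) ^ (k - 1))) :
    ∀ x : (ZMod p)ˣ,
      (x:ZMod p)^i * (1 + (x:ZMod p)^(k-1)) = (x:ZMod p)^j * (1 + (x:ZMod p)^(k-1)) := by
  intro x
  obtain ⟨ℓ, hℓ, hne, hcast⟩ := exists_prime_cast p hp x
  have := congrFun h ⟨ℓ, hℓ, hne⟩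
  simpa only [hcast] using this

lemma cancel_aux {p : ℕ} [Fact p.Prime] {i j a : ℕ} (hji : j ≤ i)
    (H : ∀ x : (ZMod p)ˣ, (x:ZMod p)^i * (1 + (x:ZMod p)^a) = (x:ZMod p)^j * (1 + (x:ZMod p)^a)) :
    ∀ x : (ZMod p)ˣ, (x:ZMod p)^a ≠ -1 → (x:ZMod p)^(i-j) = 1 := by
  intro x hx
  have hc : (1 + (x:ZMod p)^a) ≠ 0 := fun h => hx (neg_eq_of_add_eq_zero_right h).symm
  have hxj : (x:ZMod p)^j ≠ 0 := pow_ne_zero _ (Units.ne_zero x)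
  have hh := H x
  rw [show i = j + (i-j) by omega, pow_add, mul_assoc] at hh
  have h2 := mul_left_cancel₀ hxj hh
  exact mul_right_cancel₀ hc (by rw [h2, one_mul])

lemma generic_dvd (p k : ℕ) (hp : p.Prime) (hp5 : 5 ≤ p) (hke : Even k) (h4 : 4 ≤ k)
    (hle : k ≤ p + 1) (hnex : ¬(p % 4 = 3 ∧ 2 * k = p + 1)) (d : ℕ)
    (H : ∀ x : (ZMod p)ˣ, (x:ZMod p)^(k-1) ≠ -1 → (x:ZMod p)^d = 1) :
    (p - 1) ∣ d := by
  haveI : Fact p.Prime := ⟨hp⟩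
  obtain ⟨g, hg⟩ := IsCyclic.exists_generator (α := (ZMod p)ˣ)
  have horder : orderOf g = p - 1 := by
    rw [orderOf_eq_card_of_forall_mem_zpowers hg, Nat.card_eq_fintype_card, ZMod.card_units]
  set a := k - 1 with ha
  have haodd : a % 2 = 1 := by
    obtain ⟨r, hr⟩ := hke; omega
  have hpodd : p % 2 = 1 := by
    have : ¬ (2 ∣ p) := fun h =>
      by have := (Nat.prime_dvd_prime_iff_eq Nat.prime_two hp).mp h; omega
    omega
  have he : orderOf (g ^ a) = (p - 1) / Nat.gcd (p - 1) a := by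
    rw [orderOf_pow, horder]
  have hg'a : Nat.gcd (p-1) a ∣ a := Nat.gcd_dvd_right _ _
  have hg'p : Nat.gcd (p-1) a ∣ p - 1 := Nat.gcd_dvd_left _ _
  have he3 : 3 ≤ orderOf (g ^ a) := by
    rw [he]
    set g' := Nat.gcd (p-1) a with hg'
    have hg'odd : g' % 2 = 1 := by
      rcases Nat.even_or_odd g' with hcc | hcc
      · exfalso
        have h2g : (2:ℕ) ∣ g' := hcc.two_dvd
        have : (2:ℕ) ∣ a := h2g.trans hg'a
        omega
      · obtain ⟨r, hr⟩ := hcc; omega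
    obtain ⟨c, hc⟩ := hg'a
    obtain ⟨e, hep⟩ := hg'p
    have hg'pos : 0 < g' := Nat.gcd_pos_of_pos_left _ (by omega)
    rw [hep, Nat.mul_div_cancel_left _ hg'pos]
    by_contra hlt
    push_neg at hlt
    have ha3 : 3 ≤ a := by omega
    have hak : a ≤ p := by omega
    interval_cases e
    · omega
    · -- g' = p - 1, but p - 1 even and g' odd
      omega
    · -- p - 1 = g' * 2
      have hp43 : p % 4 = 3 := by omega
      have hc3 : c ≤ 2 := by
        by_contra hcc
        have : g' * 3 ≤ g' * c := Nat.mul_le_mul_left g' (by omega)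
        omega
      interval_cases c
      · omega
      · exact hnex ⟨hp43, by omega⟩
      · omega
  set G := ((g : (ZMod p)ˣ) : ZMod p) with hG
  have hGood : ∀ t : ℕ, G ^ (t * a) ≠ -1 → (p - 1) ∣ t * d := by
    intro t ht
    have h1 : ((g ^ t : (ZMod p)ˣ) : ZMod p) ^ a ≠ -1 := by
      rw [Units.val_pow_eq_pow_val, ← pow_mul]
      exact ht
    have h2 := H (g ^ t) h1
    rw [Units.val_pow_eq_pow_val, ← pow_mul] at h2
    have h3 : (g : (ZMod p)ˣ) ^ (t * d) = 1 := by
      apply Units.ext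
      rw [Units.val_pow_eq_pow_val, Units.val_one]
      exact h2
    rw [← horder]
    exact orderOf_dvd_of_pow_eq_one h3
  have hBad : ∀ t₁ t₂ : ℕ, t₁ ≤ t₂ → G ^ (t₁ * a) = -1 → G ^ (t₂ * a) = -1 →
      orderOf (g ^ a) ∣ (t₂ - t₁) := by
    intro t₁ t₂ htle h1 h2
    apply orderOf_dvd_of_pow_eq_one
    have heq : G ^ (t₂ * a) = G ^ (t₁ * a) := by rw [h1, h2]
    have hsplit : t₂ * a = t₁ * a + (t₂ - t₁) * a := by
      rw [Nat.sub_mul]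
      have := Nat.mul_le_mul_right a htle
      omega
    rw [hsplit, pow_add] at heq
    have hne : G ^ (t₁ * a) ≠ 0 := pow_ne_zero _ (Units.ne_zero g)
    have h5 : G ^ (t₁*a) * G^((t₂-t₁)*a) = G^(t₁*a) * 1 := by rw [mul_one]; exact heq
    have h6 := mul_left_cancel₀ hne h5
    apply Units.ext
    rw [Units.val_pow_eq_pow_val, Units.val_pow_eq_pow_val, Units.val_one, ← pow_mul,
      mul_comm a (t₂ - t₁)]
    exact h6
  have key : ∃ t : ℕ, (p-1) ∣ t * d ∧ (p-1) ∣ (t+1) * d := by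
    by_cases B2 : G ^ (2 * a) = -1
    · refine ⟨3, hGood 3 ?_, hGood 4 ?_⟩
      · intro B3
        have := Nat.le_of_dvd (by omega) (hBad 2 3 (by omega) B2 B3)
        omega
      · intro B4
        have := Nat.le_of_dvd (by omega) (hBad 2 4 (by omega) B2 B4)
        omega
    · by_cases B1 : G ^ (1 * a) = -1
      · refine ⟨2, hGood 2 B2, hGood 3 ?_⟩
        intro B3
        have := Nat.le_of_dvd (by omega) (hBad 1 3 (by omega) B1 B3)
        omega
      · exact ⟨1, hGood 1 B1, hGood 2 B2⟩
  obtain ⟨t, h1, h2⟩ := key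
  have heq : (t+1) * d - t * d = d := by rw [Nat.add_mul]; omega
  rw [← heq]
  exact Nat.dvd_sub h2 h1

lemma exc_dvd (p k : ℕ) (hp : p.Prime) (hp5 : 5 ≤ p) (hex : 2 * k = p + 1) (h4 : 4 ≤ k) (d : ℕ)
    (H : ∀ x : (ZMod p)ˣ, (x:ZMod p)^(k-1) ≠ -1 → (x:ZMod p)^d = 1) :
    ((p - 1) / 2) ∣ d := by
  haveI : Fact p.Prime := ⟨hp⟩
  haveI : Fact (2 < p) := ⟨by omega⟩
  obtain ⟨g, hg⟩ := IsCyclic.exists_generator (α := (ZMod p)ˣ)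
  have horder : orderOf g = p - 1 := by
    rw [orderOf_eq_card_of_forall_mem_zpowers hg, Nat.card_eq_fintype_card, ZMod.card_units]
  have hgp : ((g : (ZMod p)ˣ) : ZMod p) ^ (p - 1) = 1 := by
    have : (g : (ZMod p)ˣ) ^ (p - 1) = 1 := by rw [← horder]; exact pow_orderOf_eq_one g
    have := congrArg Units.val this
    rwa [Units.val_pow_eq_pow_val, Units.val_one] at this
  have h1 : ((g ^ 2 : (ZMod p)ˣ) : ZMod p) ^ (k-1) ≠ -1 := by
    rw [Units.val_pow_eq_pow_val, ← pow_mul, show 2 * (k - 1) = p - 1 by omega, hgp]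
    exact fun h => ZMod.neg_one_ne_one h.symm
  have h2 := H (g ^ 2) h1
  rw [Units.val_pow_eq_pow_val, ← pow_mul] at h2
  have h3 : (g : (ZMod p)ˣ) ^ (2 * d) = 1 := by
    apply Units.ext
    rw [Units.val_pow_eq_pow_val, Units.val_one]
    exact h2
  have h4' : (p - 1) ∣ 2 * d := by rw [← horder]; exact orderOf_dvd_of_pow_eq_one h3
  obtain ⟨c, hc⟩ := h4'
  set m := (p-1)/2 with hmdef
  have hm : p - 1 = 2 * m := by omega
  rw [hm] at hc
  refine ⟨c, ?_⟩
  have h5 : 2 * d = 2 * (m * c) := by rw [hc]; ring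
  omega

/-- for even `4 ≤ k ≤ p+1`, the Eisenstein eigensystem `Φ_k : ℓ ↦ 1 + ℓ^{k−1}` has
`p − 1` distinct twists, unless `p ≡ 3 (mod 4)` and `k = (p+1)/2`, in which case it has
`(p−1)/2` distinct twists. -/
theorem stmt7 (p : ℕ) (hp : p.Prime) (hp5 : 5 ≤ p) (k : ℕ) (hke : Even k)
    (h4 : 4 ≤ k) (hle : k ≤ p + 1) :
    (¬(p % 4 = 3 ∧ 2 * k = p + 1) →
      {Ψ : {ℓ : ℕ // ℓ.Prime ∧ ℓ ≠ p} → ZMod p |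
        ∃ i : ℕ, Ψ = fun ℓ => (ℓ.1 : ZMod p) ^ i * (1 + (ℓ.1 : ZMod p) ^ (k - 1))}.ncard
        = p - 1) ∧
    ((p % 4 = 3 ∧ 2 * k = p + 1) →
      {Ψ : {ℓ : ℕ // ℓ.Prime ∧ ℓ ≠ p} → ZMod p |
        ∃ i : ℕ, Ψ = fun ℓ => (ℓ.1 : ZMod p) ^ i * (1 + (ℓ.1 : ZMod p) ^ (k - 1))}.ncard
        = (p - 1) / 2) := by
  haveI : Fact p.Prime := ⟨hp⟩
  set F : ℕ → ({ℓ : ℕ // ℓ.Prime ∧ ℓ ≠ p} → ZMod p) :=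
    fun i ℓ => (ℓ.1 : ZMod p) ^ i * (1 + (ℓ.1 : ZMod p) ^ (k - 1)) with hF
  have hrange : {Ψ : {ℓ : ℕ // ℓ.Prime ∧ ℓ ≠ p} → ZMod p |
      ∃ i : ℕ, Ψ = fun ℓ => (ℓ.1 : ZMod p) ^ i * (1 + (ℓ.1 : ZMod p) ^ (k - 1))}
      = Set.range F := by
    ext Ψ
    simp only [Set.mem_setOf_eq, Set.mem_range, hF, eq_comm]
  constructor
  · intro hnex
    rw [hrange]
    apply range_ncard_of_period F (p - 1) (by omega)
    · intro i
      funext ℓ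
      simp only [hF]
      exact period_pt p k hp i ℓ
    · intro i j hi hj hfe
      have hpt := units_of_funeq p k hp (funext fun ℓ => congrFun hfe ℓ)
      rcases le_total j i with hji | hij
      · have hd := generic_dvd p k hp hp5 hke h4 hle hnex (i - j)
          (cancel_aux hji hpt)
        rcases Nat.eq_zero_or_pos (i - j) with h0 | hpos
        · omega
        · have := Nat.le_of_dvd hpos hd; omega
      · have hd := generic_dvd p k hp hp5 hke h4 hle hnex (j - i)
          (cancel_aux hij (fun x => (hpt x).symm))
        rcases Nat.eq_zero_or_pos (j - i) with h0 | hpos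
        · omega
        · have := Nat.le_of_dvd hpos hd; omega
  · rintro ⟨hp43, hex⟩
    rw [hrange]
    apply range_ncard_of_period F ((p - 1) / 2) (by omega)
    · intro i
      funext ℓ
      simp only [hF]
      exact period_pt_exc p k hp hp5 hex i ℓ
    · intro i j hi hj hfe
      have hpt := units_of_funeq p k hp (funext fun ℓ => congrFun hfe ℓ)
      rcases le_total j i with hji | hij
      · have hd := exc_dvd p k hp hp5 hex h4 (i - j) (cancel_aux hji hpt)
        rcases Nat.eq_zero_or_pos (i - j) with h0 | hpos
        · omega
        · have := Nat.le_of_dvd hpos hd; omega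
      · have hd := exc_dvd p k hp hp5 hex h4 (j - i)
          (cancel_aux hij (fun x => (hpt x).symm))
        rcases Nat.eq_zero_or_pos (j - i) with h0 | hpos
        · omega
        · have := Nat.le_of_dvd hpos hd; omega
end

section
/- Let p ≥ 5 be a prime. The number of distinct mod p eigensystems coming from level 1 Eisenstein series, i.e. the cardinality of the set of functions { ℓ ↦ ℓ^i (1 + ℓ^{k−1}) ∈ 𝔽_p, defined on primes ℓ ≠ p : k even, 4 ≤ k ≤ p+1, i ∈ ℕ }, equals (p−1)²/4. -/
lemma stmt8_pow_mod (p : ℕ) [Fact p.Prime] {x : ZMod p} (hx : x ≠ 0) (n : ℕ) :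
    x ^ (n % (p - 1)) = x ^ n := by
  conv_rhs => rw [← Nat.div_add_mod n (p - 1)]
  rw [pow_add, pow_mul, ZMod.pow_card_sub_one_eq_one hx, one_pow, one_mul]

lemma stmt8_pair (p : ℕ) [Fact p.Prime] {α β γ δ : ℕ}
    (hα : α < p - 1) (hβ : β < p - 1) (hγ : γ < p - 1) (hδ : δ < p - 1)
    (hαβ : α ≠ β) (hγδ : γ ≠ δ)
    (h : ∀ x : ZMod p, x ≠ 0 → x ^ α + x ^ β = x ^ γ + x ^ δ) :
    (α = γ ∧ β = δ) ∨ (α = δ ∧ β = γ) := by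
  classical
  set f : Polynomial (ZMod p) :=
    Polynomial.X ^ α + Polynomial.X ^ β - Polynomial.X ^ γ - Polynomial.X ^ δ with hf
  have hdeg : f.natDegree ≤ max (max α β) (max γ δ) := by
    rw [hf]
    compute_degree
    all_goals omega
  have hcard : Fintype.card {x : ZMod p // x ≠ 0} = p - 1 := by
    rw [Fintype.card_subtype_compl, ZMod.card, Fintype.card_subtype_eq]
  have hzero : f = 0 := by
    apply Polynomial.eq_zero_of_natDegree_lt_card_of_eval_eq_zero f
      (Subtype.val_injective (p := fun x : ZMod p => x ≠ 0))
    · rintro ⟨x, hx⟩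
      simp only [hf, Polynomial.eval_sub, Polynomial.eval_add, Polynomial.eval_pow,
        Polynomial.eval_X]
      linear_combination h x hx
    · rw [hcard]
      omega
  have hc : ∀ n : ℕ, ((if n = α then (1 : ZMod p) else 0) + (if n = β then 1 else 0))
      = ((if n = γ then 1 else 0) + (if n = δ then 1 else 0)) := by
    intro n
    have h0 := congrArg (fun g => Polynomial.coeff g n) hzero
    simp only [hf, Polynomial.coeff_sub, Polynomial.coeff_add, Polynomial.coeff_X_pow,
      Polynomial.coeff_zero] at h0
    linear_combination h0
  have hone : (1 : ZMod p) ≠ 0 := one_ne_zero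
  by_cases h1 : α = γ
  · left
    refine ⟨h1, ?_⟩
    have h2 := hc β
    rw [if_neg (fun hh => hαβ hh.symm), if_pos rfl, if_neg (fun hh => hαβ (h1 ▸ hh).symm)] at h2
    by_contra h3
    rw [if_neg h3] at h2
    simp at h2
  · right
    have h2 := hc α
    rw [if_pos rfl, if_neg hαβ, if_neg h1] at h2
    have h4 : α = δ := by
      by_contra h4
      rw [if_neg h4] at h2
      simp at h2
    refine ⟨h4, ?_⟩
    have h5 := hc γ
    rw [if_neg (fun hh => h1 hh.symm), if_pos rfl, if_neg hγδ] at h5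
    by_contra h6
    rw [if_neg (fun hh => h6 hh.symm)] at h5
    simp at h5

lemma stmt8_count_even (q : ℕ) (hq : q % 2 = 0) (h0 : q ≠ 0) :
    {a : ZMod q | Even a.val}.ncard = q / 2 := by
  haveI : NeZero q := ⟨h0⟩
  have hinj : Function.Injective (fun k : Fin (q / 2) => ((2 * (k : ℕ) : ℕ) : ZMod q)) := by
    intro k k' h
    have h2 := congrArg ZMod.val h
    simp only [ZMod.val_natCast] at h2
    rw [Nat.mod_eq_of_lt (by omega), Nat.mod_eq_of_lt (by omega)] at h2
    exact Fin.ext (by omega)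
  have hset : {a : ZMod q | Even a.val}
      = Set.range (fun k : Fin (q / 2) => ((2 * (k : ℕ) : ℕ) : ZMod q)) := by
    ext a
    simp only [Set.mem_setOf_eq, Set.mem_range]
    constructor
    · rintro ⟨r, hr⟩
      have hlt : a.val < q := ZMod.val_lt a
      refine ⟨⟨r, by omega⟩, ?_⟩
      have h3 : (2 * r : ℕ) = a.val := by omega
      show ((2 * r : ℕ) : ZMod q) = a
      rw [h3]
      exact ZMod.natCast_rightInverse a
    · rintro ⟨k, rfl⟩
      show Even ((2 * (k : ℕ) : ℕ) : ZMod q).val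
      rw [ZMod.val_natCast]
      have := Nat.mod_mod_of_dvd (2 * (k : ℕ)) (by omega : 2 ∣ q)
      rw [Nat.even_iff]
      omega
  rw [hset, ← Set.image_univ, Set.ncard_image_of_injective _ hinj, Set.ncard_univ]
  simp

lemma stmt8_count_odd (q : ℕ) (hq : q % 2 = 0) (h0 : q ≠ 0) :
    {a : ZMod q | Odd a.val}.ncard = q / 2 := by
  haveI : NeZero q := ⟨h0⟩
  have hinj : Function.Injective (fun k : Fin (q / 2) => ((2 * (k : ℕ) + 1 : ℕ) : ZMod q)) := by
    intro k k' h
    have h2 := congrArg ZMod.val h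
    simp only [ZMod.val_natCast] at h2
    rw [Nat.mod_eq_of_lt (by omega), Nat.mod_eq_of_lt (by omega)] at h2
    exact Fin.ext (by omega)
  have hset : {a : ZMod q | Odd a.val}
      = Set.range (fun k : Fin (q / 2) => ((2 * (k : ℕ) + 1 : ℕ) : ZMod q)) := by
    ext a
    simp only [Set.mem_setOf_eq, Set.mem_range]
    constructor
    · rintro ⟨r, hr⟩
      have hlt : a.val < q := ZMod.val_lt a
      refine ⟨⟨r, by omega⟩, ?_⟩
      have h3 : (2 * r + 1 : ℕ) = a.val := by omega
      show ((2 * r + 1 : ℕ) : ZMod q) = a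
      rw [h3]
      exact ZMod.natCast_rightInverse a
    · rintro ⟨k, rfl⟩
      show Odd ((2 * (k : ℕ) + 1 : ℕ) : ZMod q).val
      rw [ZMod.val_natCast]
      have := Nat.mod_mod_of_dvd (2 * (k : ℕ) + 1) (by omega : 2 ∣ q)
      rw [Nat.odd_iff]
      omega
  rw [hset, ← Set.image_univ, Set.ncard_image_of_injective _ hinj, Set.ncard_univ]
  simp

/-- the number of distinct mod `p` eigensystems coming from level 1 Eisenstein
series (all twists of `ℓ ↦ 1 + ℓ^{k−1}` for even `4 ≤ k ≤ p+1`) equals `(p−1)²/4`. -/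
theorem stmt8 (p : ℕ) (hp : p.Prime) (hp5 : 5 ≤ p) :
    {Ψ : {ℓ : ℕ // ℓ.Prime ∧ ℓ ≠ p} → ZMod p |
      ∃ k i : ℕ, Even k ∧ 4 ≤ k ∧ k ≤ p + 1 ∧
        Ψ = fun ℓ => (ℓ.1 : ZMod p) ^ i * (1 + (ℓ.1 : ZMod p) ^ (k - 1))}.ncard
      = (p - 1) ^ 2 / 4 := by
  haveI hfact : Fact p.Prime := ⟨hp⟩
  haveI hq0 : NeZero (p - 1) := ⟨by omega⟩
  haveI hpnz : NeZero p := ⟨hp.pos.ne'⟩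
  have hp2 : p % 2 = 1 := Nat.odd_iff.mp (hp.odd_of_ne_two (by omega))
  have h2q : 2 ∣ (p - 1) := by omega
  have hℓne : ∀ ℓ : {ℓ : ℕ // ℓ.Prime ∧ ℓ ≠ p}, (ℓ.1 : ZMod p) ≠ 0 := by
    rintro ⟨ℓ, hℓ, hne⟩ h0
    rw [ZMod.natCast_eq_zero_iff] at h0
    exact hne ((Nat.prime_dvd_prime_iff_eq hp hℓ).mp h0).symm
  set G : ZMod (p - 1) × ZMod (p - 1) → ({ℓ : ℕ // ℓ.Prime ∧ ℓ ≠ p} → ZMod p) :=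
    fun ab ℓ => (ℓ.1 : ZMod p) ^ ab.1.val + (ℓ.1 : ZMod p) ^ ab.2.val with hG
  set A : Set (ZMod (p - 1) × ZMod (p - 1)) := {ab | Even ab.1.val ∧ Odd ab.2.val} with hA
  have hGeq : ∀ i k : ℕ, 4 ≤ k →
      (fun ℓ : {ℓ : ℕ // ℓ.Prime ∧ ℓ ≠ p} =>
          (ℓ.1 : ZMod p) ^ i * (1 + (ℓ.1 : ZMod p) ^ (k - 1)))
        = G ((i : ZMod (p - 1)), ((i + (k - 1) : ℕ) : ZMod (p - 1))) := by
    intro i k hk4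
    funext ℓ
    have hx := hℓne ℓ
    simp only [hG, ZMod.val_natCast]
    rw [mul_add, mul_one, ← pow_add, stmt8_pow_mod p hx, stmt8_pow_mod p hx]
  have hset : {Ψ : {ℓ : ℕ // ℓ.Prime ∧ ℓ ≠ p} → ZMod p |
      ∃ k i : ℕ, Even k ∧ 4 ≤ k ∧ k ≤ p + 1 ∧
        Ψ = fun ℓ => (ℓ.1 : ZMod p) ^ i * (1 + (ℓ.1 : ZMod p) ^ (k - 1))} = G '' A := by
    ext Ψ
    simp only [Set.mem_setOf_eq, Set.mem_image]
    constructor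
    · rintro ⟨k, i, hke, hk4, hkp, rfl⟩
      have hkodd : (k - 1) % 2 = 1 := by
        rcases hke with ⟨t, ht⟩; omega
      have hpar1 : (i : ZMod (p - 1)).val % 2 = i % 2 := by
        rw [ZMod.val_natCast]; exact Nat.mod_mod_of_dvd _ h2q
      have hpar2 : (((i + (k - 1) : ℕ)) : ZMod (p - 1)).val % 2 = (i + (k - 1)) % 2 := by
        rw [ZMod.val_natCast]; exact Nat.mod_mod_of_dvd _ h2q
      by_cases hpe : (i : ZMod (p - 1)).val % 2 = 0
      · have he1 : Even (i : ZMod (p - 1)).val := Nat.even_iff.mpr hpe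
        have ho1 : Odd (((i + (k - 1) : ℕ)) : ZMod (p - 1)).val := Nat.odd_iff.mpr (by omega)
        exact ⟨((i : ZMod (p - 1)), ((i + (k - 1) : ℕ) : ZMod (p - 1))),
          ⟨he1, ho1⟩, (hGeq i k hk4).symm⟩
      · have he1 : Even (((i + (k - 1) : ℕ)) : ZMod (p - 1)).val := Nat.even_iff.mpr (by omega)
        have ho1 : Odd (i : ZMod (p - 1)).val := Nat.odd_iff.mpr (by omega)
        refine ⟨(((i + (k - 1) : ℕ) : ZMod (p - 1)), (i : ZMod (p - 1))),
          ⟨he1, ho1⟩, ?_⟩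
        have hcomm : G (((i + (k - 1) : ℕ) : ZMod (p - 1)), (i : ZMod (p - 1)))
            = G ((i : ZMod (p - 1)), ((i + (k - 1) : ℕ) : ZMod (p - 1))) := by
          funext ℓ; exact add_comm _ _
        rw [hcomm]; exact (hGeq i k hk4).symm
    · rintro ⟨⟨a, b⟩, ⟨hae, hbo⟩, rfl⟩
      replace hae : Even a.val := hae
      replace hbo : Odd b.val := hbo
      have hb : b = a + (b - a) := by ring
      have hbval : b.val = (a.val + (b - a).val) % (p - 1) := by
        conv_lhs => rw [hb]
        rw [ZMod.val_add]
      have hmm : (a.val + (b - a).val) % (p - 1) % 2 = (a.val + (b - a).val) % 2 :=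
        Nat.mod_mod_of_dvd _ h2q
      have hae' := Nat.even_iff.mp hae
      have hbo' := Nat.odd_iff.mp hbo
      have hdpar : (b - a).val % 2 = 1 := by omega
      have hdlt : (b - a).val < p - 1 := ZMod.val_lt _
      refine ⟨if (b - a).val = 1 then p + 1 else (b - a).val + 1, a.val,
        ?_, ?_, ?_, ?_⟩
      · split_ifs with h
        · exact Nat.even_iff.mpr (by omega)
        · exact Nat.even_iff.mpr (by omega)
      · split_ifs with h <;> omega
      · split_ifs with h <;> omega
      · funext ℓ
        have hx := hℓne ℓ
        have hk1 : (if (b - a).val = 1 then p + 1 else (b - a).val + 1) - 1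
            = if (b - a).val = 1 then p else (b - a).val := by split_ifs <;> omega
        rw [hk1]
        have hmod : (a.val + (if (b - a).val = 1 then p else (b - a).val)) % (p - 1)
            = b.val := by
          rw [hbval]
          split_ifs with h
          · have h5 : a.val + p = (a.val + (b - a).val) + (p - 1) := by omega
            rw [h5, Nat.add_mod_right]
          · rfl
        have h6 : (ℓ.1 : ZMod p) ^ (a.val + (if (b - a).val = 1 then p else (b - a).val))
            = (ℓ.1 : ZMod p) ^ b.val := by
          rw [← stmt8_pow_mod p hx (a.val + _), hmod]
        show G (a, b) ℓ = _
        simp only [hG]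
        rw [mul_add, mul_one, ← pow_add, h6]
  have hinj : Set.InjOn G A := by
    rintro ⟨a, b⟩ ⟨hae, hbo⟩ ⟨a', b'⟩ ⟨hae', hbo'⟩ heq
    replace hae : Even a.val := hae
    replace hbo : Odd b.val := hbo
    replace hae' : Even a'.val := hae'
    replace hbo' : Odd b'.val := hbo'
    have hall : ∀ x : ZMod p, x ≠ 0 → x ^ a.val + x ^ b.val = x ^ a'.val + x ^ b'.val := by
      intro x hx
      have hu : IsUnit x := isUnit_iff_ne_zero.mpr hx
      obtain ⟨ℓ, hℓgt, hℓp, hℓx⟩ := Nat.forall_exists_prime_gt_and_eq_mod hu p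
      have h7 := congrFun heq ⟨ℓ, hℓp, by omega⟩
      simpa only [hG, hℓx] using h7
    have h1 : a.val ≠ b.val := by
      have e1 := Nat.even_iff.mp hae
      have e2 := Nat.odd_iff.mp hbo
      omega
    have h2 : a'.val ≠ b'.val := by
      have e1 := Nat.even_iff.mp hae'
      have e2 := Nat.odd_iff.mp hbo'
      omega
    rcases stmt8_pair p (ZMod.val_lt a) (ZMod.val_lt b) (ZMod.val_lt a') (ZMod.val_lt b')
      h1 h2 hall with ⟨hh1, hh2⟩ | ⟨hh1, hh2⟩
    · exact Prod.ext (ZMod.val_injective _ hh1) (ZMod.val_injective _ hh2)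
    · exfalso
      have e1 := Nat.even_iff.mp hae
      have e2 := Nat.odd_iff.mp hbo'
      omega
  rw [hset, Set.ncard_image_of_injOn hinj]
  have hAprod : A = {a : ZMod (p - 1) | Even a.val} ×ˢ {b : ZMod (p - 1) | Odd b.val} := by
    ext ⟨a, b⟩
    simp [hA, Set.mem_prod]
  have hprod : ({a : ZMod (p - 1) | Even a.val} ×ˢ {b : ZMod (p - 1) | Odd b.val}).ncard
      = {a : ZMod (p - 1) | Even a.val}.ncard * {b : ZMod (p - 1) | Odd b.val}.ncard := by
    rw [← Nat.card_coe_set_eq, ← Nat.card_coe_set_eq, ← Nat.card_coe_set_eq,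
      Nat.card_congr (Equiv.Set.prod _ _), Nat.card_prod]
  rw [hAprod, hprod, stmt8_count_even _ (by omega) (by omega),
    stmt8_count_odd _ (by omega) (by omega)]
  obtain ⟨m, hm⟩ : ∃ m, p - 1 = 2 * m := ⟨(p - 1) / 2, by omega⟩
  rw [hm]
  have h8 : (2 * m) ^ 2 = 4 * (m * m) := by ring
  rw [h8, Nat.mul_div_cancel_left _ (by norm_num), Nat.mul_div_cancel_left _ (by norm_num)]
end
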